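/- Let φ₁(x) = (1−x)^{−θν₁} x^{−θν₀} e^{−σx}, x̃ := (∫₀¹ p^{θν₀+1}(1−p)^{θν₁} e^{σp} dp)/(∫₀¹ p^{θν₀}(1−p)^{θν₁} e^{σp} dp), and φ₂(x) := σ φ₁(x) ∫₀ˣ (x̃ − p)/φ₁(p) dp. Then φ₂ solves ψ'(x) + 2(a(x)/b(x))ψ(x) = −σ(x − x̃) on (0,1), and lim_{x→0⁺} φ₂(x) = lim_{x→1⁻} φ₂(x) = 0. -/

import Mathlib

open Real

private lemma contRpowConst {A : ℝ} (hA : 0 ≤ A) : Continuous fun y : ℝ => y ^ A :=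
  continuous_iff_continuousAt.2 fun x => Real.continuousAt_rpow_const x A (Or.inr hA)

/-- The variation-of-parameters solution `φ₂` solves the inhomogeneous first-order
ODE `ψ' + 2(a/b)ψ = -σ(x - x̃)` on `(0,1)` (where `2a/b = σ - θν₁/(1-x) + θν₀/x`),
and vanishes in the limits `x → 0⁺` and `x → 1⁻`. -/
theorem stmt15 (θ σ ν0 ν1 : ℝ) (hθ : 0 < θ) (hσ : 0 ≤ σ)
    (hν0 : ν0 ∈ Set.Ioo (0:ℝ) 1) (hν1 : ν1 ∈ Set.Ioo (0:ℝ) 1) (hνsum : ν0 + ν1 = 1)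
    (φ₁ φ₂ : ℝ → ℝ) (xt : ℝ)
    (hφ₁ : ∀ x, φ₁ x = (1-x) ^ (-(θ * ν1)) * x ^ (-(θ * ν0)) * Real.exp (-(σ * x)))
    (hxt : xt = (∫ p in (0:ℝ)..1, p ^ (θ * ν0 + 1) * (1-p) ^ (θ * ν1) * Real.exp (σ * p))
              / (∫ p in (0:ℝ)..1, p ^ (θ * ν0) * (1-p) ^ (θ * ν1) * Real.exp (σ * p)))
    (hφ₂ : ∀ x, φ₂ x = σ * φ₁ x * ∫ p in (0:ℝ)..x, (xt - p) / φ₁ p) :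
    (∀ x ∈ Set.Ioo (0:ℝ) 1,
      HasDerivAt φ₂ (-((σ - θ * ν1 / (1-x) + θ * ν0 / x) * φ₂ x) - σ * (x - xt)) x) ∧
    Filter.Tendsto φ₂ (nhdsWithin 0 (Set.Ioi 0)) (nhds 0) ∧
    Filter.Tendsto φ₂ (nhdsWithin 1 (Set.Iio 1)) (nhds 0) := by
  set A := θ * ν1 with hAdef
  set B := θ * ν0 with hBdef
  have hA : 0 < A := mul_pos hθ hν1.1
  have hB : 0 < B := mul_pos hθ hν0.1
  set h : ℝ → ℝ := fun p => (1-p) ^ A * p ^ B * Real.exp (σ * p) with hhdef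
  have hhcont : Continuous h := by
    exact (((contRpowConst hA.le).comp (continuous_const.sub continuous_id)).mul
      (contRpowConst hB.le)).mul (Real.continuous_exp.comp (continuous_const.mul continuous_id))
  have hhpos : ∀ x ∈ Set.Ioo (0:ℝ) 1, 0 < h x := fun x hx =>
    mul_pos (mul_pos (Real.rpow_pos_of_pos (by linarith [hx.2]) A)
      (Real.rpow_pos_of_pos hx.1 B)) (Real.exp_pos _)
  have hh0 : h 0 = 0 := by
    simp [hhdef, Real.zero_rpow hB.ne']
  have hh1 : h 1 = 0 := by
    norm_num [hhdef, Real.zero_rpow hA.ne']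
  set G : ℝ → ℝ := fun p => (xt - p) * h p with hGdef
  have hGcont : Continuous G := (continuous_const.sub continuous_id).mul hhcont
  set F : ℝ → ℝ := fun x => ∫ p in (0:ℝ)..x, G p with hFdef
  have hFderiv : ∀ x : ℝ, HasDerivAt F (G x) x := fun x =>
    intervalIntegral.integral_hasDerivAt_right (hGcont.intervalIntegrable _ _)
      (hGcont.stronglyMeasurableAtFilter _ _) hGcont.continuousAt
  have hFcont : Continuous F := continuous_iff_continuousAt.2 fun x => (hFderiv x).continuousAt
  have hF0 : F 0 = 0 := intervalIntegral.integral_same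
  -- φ₁ * h = 1 on Ioo 0 1
  have hmul : ∀ p ∈ Set.Ioo (0:ℝ) 1, φ₁ p * h p = 1 := by
    intro p hp
    have h1 : (0:ℝ) < 1 - p := by linarith [hp.2]
    have e1 : ((1:ℝ)-p) ^ A ≠ 0 := (Real.rpow_pos_of_pos h1 A).ne'
    have e2 : p ^ B ≠ 0 := (Real.rpow_pos_of_pos hp.1 B).ne'
    rw [hφ₁ p]
    simp only [hhdef]
    rw [Real.rpow_neg h1.le, Real.rpow_neg hp.1.le, Real.exp_neg]
    field_simp
  have hφ₁inv : ∀ p ∈ Set.Ioo (0:ℝ) 1, φ₁ p = (h p)⁻¹ := fun p hp =>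
    eq_inv_of_mul_eq_one_left (hmul p hp)
  -- integrand equality on Icc 0 1
  have hint_eq : ∀ p ∈ Set.Icc (0:ℝ) 1, (xt - p) / φ₁ p = G p := by
    intro p hp
    rcases eq_or_lt_of_le hp.1 with h0 | h0
    · obtain rfl : p = 0 := h0.symm
      rw [hφ₁ 0]
      norm_num [hGdef, hh0, Real.zero_rpow (neg_ne_zero.2 hB.ne')]
    rcases eq_or_lt_of_le hp.2 with h1 | h1
    · obtain rfl : p = 1 := h1
      rw [hφ₁ 1]
      norm_num [hGdef, hh1, Real.zero_rpow (neg_ne_zero.2 hA.ne')]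
    · rw [hφ₁inv p ⟨h0, h1⟩, div_eq_mul_inv, inv_inv]
  have hFeq : ∀ x ∈ Set.Icc (0:ℝ) 1, (∫ p in (0:ℝ)..x, (xt - p) / φ₁ p) = F x := by
    intro x hx
    apply intervalIntegral.integral_congr
    intro p hp
    rw [Set.uIcc_of_le hx.1] at hp
    exact hint_eq p ⟨hp.1, hp.2.trans hx.2⟩
  have hφ₂F : ∀ x ∈ Set.Icc (0:ℝ) 1, φ₂ x = σ * φ₁ x * F x := fun x hx => by
    rw [hφ₂ x, hFeq x hx]
  -- derivative of h on (0,1)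
  have hhderiv : ∀ x ∈ Set.Ioo (0:ℝ) 1,
      HasDerivAt h (h x * (B/x - A/(1-x) + σ)) x := by
    intro x hx
    have hx1 : (0:ℝ) < 1 - x := by linarith [hx.2]
    have d1 : HasDerivAt (fun y : ℝ => (1-y) ^ A) (-1 * A * (1-x) ^ (A-1)) x :=
      ((hasDerivAt_id x).const_sub 1).rpow_const (Or.inl hx1.ne')
    have d2 : HasDerivAt (fun y : ℝ => y ^ B) (B * x ^ (B-1)) x :=
      Real.hasDerivAt_rpow_const (Or.inl hx.1.ne')
    have d3 : HasDerivAt (fun y : ℝ => Real.exp (σ * y)) (Real.exp (σ * x) * (σ * 1)) x :=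
      ((hasDerivAt_id x).const_mul σ).exp
    have dall := (d1.mul d2).mul d3
    convert dall using 1
    · rfl
    · rfl
    · rfl
    have e1 : (1-x) ^ (A-1) = (1-x) ^ A / (1-x) := by
      rw [Real.rpow_sub hx1, Real.rpow_one]
    have e2 : x ^ (B-1) = x ^ B / x := by
      rw [Real.rpow_sub hx.1, Real.rpow_one]
    simp only [hhdef]
    rw [e1, e2]
    simp only [Pi.mul_apply]
    field_simp
    ring
  -- derivative of φ₁ on (0,1)
  have hφ₁deriv : ∀ x ∈ Set.Ioo (0:ℝ) 1,
      HasDerivAt φ₁ (φ₁ x * (A/(1-x) - B/x - σ)) x := by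
    intro x hx
    have hx1 : (0:ℝ) < 1 - x := by linarith [hx.2]
    have d1 : HasDerivAt (fun y : ℝ => (1-y) ^ (-A)) (-1 * -A * (1-x) ^ (-A-1)) x :=
      ((hasDerivAt_id x).const_sub 1).rpow_const (Or.inl hx1.ne')
    have d2 : HasDerivAt (fun y : ℝ => y ^ (-B)) (-B * x ^ (-B-1)) x :=
      Real.hasDerivAt_rpow_const (Or.inl hx.1.ne')
    have d3 : HasDerivAt (fun y : ℝ => Real.exp (-(σ * y)))
        (Real.exp (-(σ * x)) * -(σ * 1)) x :=
      (((hasDerivAt_id x).const_mul σ).neg).exp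
    have key : HasDerivAt (fun y : ℝ => (1-y) ^ (-A) * y ^ (-B) * Real.exp (-(σ * y)))
        (φ₁ x * (A/(1-x) - B/x - σ)) x := by
      convert (d1.mul d2).mul d3 using 1
      · rfl
      · rfl
      · rfl
      rw [hφ₁ x]
      have e1 : (1-x) ^ (-A-1) = (1-x) ^ (-A) / (1-x) := by
        rw [Real.rpow_sub hx1, Real.rpow_one]
      have e2 : x ^ (-B-1) = x ^ (-B) / x := by
        rw [Real.rpow_sub hx.1, Real.rpow_one]
      rw [e1, e2]
      simp only [Pi.mul_apply]
      field_simp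
      ring
    exact key.congr_of_eventuallyEq (Filter.Eventually.of_forall fun y => hφ₁ y)
  refine ⟨?_, ?_, ?_⟩
  · -- the ODE
    intro x hx
    have hmem : Set.Ioo (0:ℝ) 1 ∈ nhds x := isOpen_Ioo.mem_nhds hx
    have hIder : HasDerivAt (fun y => ∫ p in (0:ℝ)..y, (xt - p) / φ₁ p) (G x) x := by
      apply (hFderiv x).congr_of_eventuallyEq
      filter_upwards [hmem] with y hy
      exact hFeq y (Set.Ioo_subset_Icc_self hy)
    have hder2 := ((hφ₁deriv x hx).const_mul σ).mul hIder
    have key := hder2.congr_of_eventuallyEq (Filter.Eventually.of_forall fun y => hφ₂ y)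
    convert key using 1
    · rfl
    · rfl
    rw [hFeq x (Set.Ioo_subset_Icc_self hx), hφ₂F x (Set.Ioo_subset_Icc_self hx)]
    simp only [hGdef]
    have hm := hmul x hx
    linear_combination (-(σ * (xt - x))) * hm
  · -- limit at 0⁺
    set b₀ : ℝ := min (1/2) (B/(2*A+1)) with hb₀def
    have hb₀pos : 0 < b₀ := lt_min (by norm_num) (by positivity)
    have hb₀half : b₀ ≤ 1/2 := min_le_left _ _
    have hb₀B : b₀ ≤ B/(2*A+1) := min_le_right _ _
    have hsub : Set.Ioo (0:ℝ) b₀ ⊆ Set.Ioo 0 1 :=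
      Set.Ioo_subset_Ioo le_rfl (by linarith)
    have hDpos : ∀ x ∈ Set.Ioo (0:ℝ) b₀, 0 < B/x - A/(1-x) + σ := by
      intro x hx
      have hx0 := hx.1
      have hxh : x < 1/2 := lt_of_lt_of_le hx.2 hb₀half
      have h1x : (0:ℝ) < 1 - x := by linarith
      have h2 : A/(1-x) ≤ 2*A := by
        rw [div_le_iff₀ h1x]; nlinarith
      have h3 : 2*A+1 < B/x := by
        rw [lt_div_iff₀ hx0]
        have hlt : x < B/(2*A+1) := lt_of_lt_of_le hx.2 hb₀B
        calc (2*A+1)*x < (2*A+1)*(B/(2*A+1)) :=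
              mul_lt_mul_of_pos_left hlt (by positivity)
          _ = B := by field_simp
      linarith
    have hg' : ∀ x ∈ Set.Ioo (0:ℝ) b₀, h x * (B/x - A/(1-x) + σ) ≠ 0 := fun x hx =>
      (mul_pos (hhpos x (hsub hx)) (hDpos x hx)).ne'
    have hFto0 : Filter.Tendsto F (nhdsWithin 0 (Set.Ioi 0)) (nhds 0) := by
      have := hFcont.tendsto 0
      rw [hF0] at this
      exact this.mono_left nhdsWithin_le_nhds
    have hhto0 : Filter.Tendsto h (nhdsWithin 0 (Set.Ioi 0)) (nhds 0) := by
      have := hhcont.tendsto 0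
      rw [hh0] at this
      exact this.mono_left nhdsWithin_le_nhds
    have hdiv : Filter.Tendsto (fun x => G x / (h x * (B/x - A/(1-x) + σ)))
        (nhdsWithin 0 (Set.Ioi 0)) (nhds 0) := by
      have hmain : Filter.Tendsto (fun x => (xt - x) / (B/x - A/(1-x) + σ))
          (nhdsWithin 0 (Set.Ioi 0)) (nhds 0) := by
        apply Filter.Tendsto.div_atTop (a := xt - 0)
        · exact (tendsto_const_nhds.sub Filter.tendsto_id).mono_left nhdsWithin_le_nhds
        · have h1 : Filter.Tendsto (fun x:ℝ => B/x) (nhdsWithin 0 (Set.Ioi 0))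
              Filter.atTop := by
            simp only [div_eq_mul_inv]
            exact Filter.Tendsto.const_mul_atTop hB tendsto_inv_nhdsGT_zero
          have h2 : Filter.Tendsto (fun x:ℝ => -(A/(1-x)) + σ) (nhdsWithin 0 (Set.Ioi 0))
              (nhds (-(A/(1-(0:ℝ))) + σ)) := by
            apply Filter.Tendsto.mono_left _ nhdsWithin_le_nhds
            exact (((tendsto_const_nhds.div
              (tendsto_const_nhds.sub Filter.tendsto_id) (by norm_num)).neg).add tendsto_const_nhds)
          exact (h1.atTop_add h2).congr (fun x => by ring)
      apply Filter.Tendsto.congr' _ hmain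
      filter_upwards [Ioo_mem_nhdsGT_of_mem (Set.left_mem_Ico.2 hb₀pos)] with x hx
      simp only [hGdef]
      rw [mul_comm (xt - x) (h x), mul_div_mul_left _ _ (hhpos x (hsub hx)).ne']
    have hFh := HasDerivAt.lhopital_zero_right_on_Ioo hb₀pos
      (fun x _ => hFderiv x) (fun x hx => hhderiv x (hsub hx)) hg' hFto0 hhto0 hdiv
    have hσF := hFh.const_mul σ
    rw [mul_zero] at hσF
    apply Filter.Tendsto.congr' _ hσF
    filter_upwards [Ioo_mem_nhdsGT_of_mem
      (Set.left_mem_Ico.2 (by norm_num : (0:ℝ) < 1))] with x hx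
    rw [hφ₂F x (Set.Ioo_subset_Icc_self hx), hφ₁inv x hx, div_eq_mul_inv]
    ring
  · -- limit at 1⁻
    -- F 1 = 0
    have hcont_den : Continuous fun p : ℝ => p ^ B * (1-p) ^ A * Real.exp (σ * p) :=
      ((contRpowConst hB.le).mul ((contRpowConst hA.le).comp
        (continuous_const.sub continuous_id))).mul
        (Real.continuous_exp.comp (continuous_const.mul continuous_id))
    have hden_pos : 0 < ∫ p in (0:ℝ)..1, p ^ B * (1-p) ^ A * Real.exp (σ * p) := by
      apply intervalIntegral.intervalIntegral_pos_of_pos_on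
        (hcont_den.intervalIntegrable 0 1)
      · intro p hp
        exact mul_pos (mul_pos (Real.rpow_pos_of_pos hp.1 B)
          (Real.rpow_pos_of_pos (by linarith [hp.2]) A)) (Real.exp_pos _)
      · norm_num
    have hden_eq : (∫ p in (0:ℝ)..1, p ^ B * (1-p) ^ A * Real.exp (σ * p))
        = ∫ p in (0:ℝ)..1, h p :=
      intervalIntegral.integral_congr fun p _ => by simp only [hhdef]; ring
    have hnum_eq : (∫ p in (0:ℝ)..1, p ^ (B+1) * (1-p) ^ A * Real.exp (σ * p))
        = ∫ p in (0:ℝ)..1, p * h p := by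
      apply intervalIntegral.integral_congr
      intro p _
      simp only [hhdef]
      rcases eq_or_ne p 0 with rfl | hp0
      · simp [Real.zero_rpow (by positivity : B + 1 ≠ 0), Real.zero_rpow hB.ne']
      · rw [Real.rpow_add_one hp0]; ring
    have hF1 : F 1 = 0 := by
      have hInt1 : IntervalIntegrable (fun p => xt * h p) MeasureTheory.volume 0 1 :=
        (continuous_const.mul hhcont).intervalIntegrable 0 1
      have hInt2 : IntervalIntegrable (fun p => p * h p) MeasureTheory.volume 0 1 :=
        (continuous_id.mul hhcont).intervalIntegrable 0 1
      have hsplit : F 1 = (∫ p in (0:ℝ)..1, xt * h p) - ∫ p in (0:ℝ)..1, p * h p := by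
        rw [hFdef, ← intervalIntegral.integral_sub hInt1 hInt2]
        apply intervalIntegral.integral_congr
        intro p _
        simp only [hGdef]
        ring
      rw [hsplit, intervalIntegral.integral_const_mul, ← hden_eq, ← hnum_eq, hxt]
      field_simp
      rw [sub_eq_zero]
      apply intervalIntegral.integral_congr
      intro p _
      ring
    set a₁ : ℝ := max (1/2) (1 - A/(2*B+σ+1)) with ha₁def
    have ha₁lt : a₁ < 1 := max_lt (by norm_num) (by
      have : 0 < A/(2*B+σ+1) := by positivity
      linarith)
    have ha₁half : 1/2 ≤ a₁ := le_max_left _ _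
    have ha₁pos : (0:ℝ) < a₁ := lt_of_lt_of_le (by norm_num) ha₁half
    have hsub : Set.Ioo a₁ 1 ⊆ Set.Ioo 0 1 := Set.Ioo_subset_Ioo (by linarith) le_rfl
    have hDneg : ∀ x ∈ Set.Ioo a₁ 1, B/x - A/(1-x) + σ < 0 := by
      intro x hx
      have hxh : 1/2 < x := lt_of_le_of_lt ha₁half hx.1
      have hx0 : (0:ℝ) < x := by linarith
      have h1x : (0:ℝ) < 1 - x := by linarith [hx.2]
      have h2 : B/x < 2*B := by rw [div_lt_iff₀ hx0]; nlinarith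
      have h3 : 2*B+σ+1 < A/(1-x) := by
        rw [lt_div_iff₀ h1x]
        have hxa : 1 - A/(2*B+σ+1) < x := lt_of_le_of_lt (le_max_right _ _) hx.1
        have hpos : (0:ℝ) < 2*B+σ+1 := by positivity
        have hlt : 1 - x < A/(2*B+σ+1) := by linarith
        calc (2*B+σ+1)*(1-x) < (2*B+σ+1)*(A/(2*B+σ+1)) :=
              mul_lt_mul_of_pos_left hlt hpos
          _ = A := by field_simp
      linarith
    have hg' : ∀ x ∈ Set.Ioo a₁ 1, h x * (B/x - A/(1-x) + σ) ≠ 0 := fun x hx =>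
      (mul_neg_of_pos_of_neg (hhpos x (hsub hx)) (hDneg x hx)).ne
    have hFto1 : Filter.Tendsto F (nhdsWithin 1 (Set.Iio 1)) (nhds 0) := by
      have := hFcont.tendsto 1
      rw [hF1] at this
      exact this.mono_left nhdsWithin_le_nhds
    have hhto1 : Filter.Tendsto h (nhdsWithin 1 (Set.Iio 1)) (nhds 0) := by
      have := hhcont.tendsto 1
      rw [hh1] at this
      exact this.mono_left nhdsWithin_le_nhds
    have hdiv : Filter.Tendsto (fun x => G x / (h x * (B/x - A/(1-x) + σ)))
        (nhdsWithin 1 (Set.Iio 1)) (nhds 0) := by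
      have hmain : Filter.Tendsto (fun x => (xt - x) / (B/x - A/(1-x) + σ))
          (nhdsWithin 1 (Set.Iio 1)) (nhds 0) := by
        have key : Filter.Tendsto (fun x => (-(xt - x)) / (-(B/x - A/(1-x) + σ)))
            (nhdsWithin 1 (Set.Iio 1)) (nhds 0) := by
          apply Filter.Tendsto.div_atTop (a := -(xt - 1))
          · exact ((tendsto_const_nhds.sub Filter.tendsto_id).neg).mono_left nhdsWithin_le_nhds
          · have hinv : Filter.Tendsto (fun x:ℝ => (1-x)⁻¹)
                (nhdsWithin 1 (Set.Iio 1)) Filter.atTop := by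
              apply tendsto_inv_nhdsGT_zero.comp
              rw [tendsto_nhdsWithin_iff]
              constructor
              · have h0 : Filter.Tendsto (fun x:ℝ => 1 - x) (nhds 1) (nhds (1-1)) :=
                  tendsto_const_nhds.sub Filter.tendsto_id
                norm_num at h0
                exact h0.mono_left nhdsWithin_le_nhds
              · filter_upwards [self_mem_nhdsWithin] with x hx
                simp only [Set.mem_Iio] at hx
                simp only [Set.mem_Ioi]
                linarith
            have h1 : Filter.Tendsto (fun x:ℝ => A/(1-x))
                (nhdsWithin 1 (Set.Iio 1)) Filter.atTop := by
              simp only [div_eq_mul_inv]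
              exact Filter.Tendsto.const_mul_atTop hA hinv
            have h2 : Filter.Tendsto (fun x:ℝ => -(B/x) - σ)
                (nhdsWithin 1 (Set.Iio 1)) (nhds (-(B/(1:ℝ)) - σ)) := by
              apply Filter.Tendsto.mono_left _ nhdsWithin_le_nhds
              exact ((tendsto_const_nhds.div Filter.tendsto_id (by norm_num)).neg).sub
                tendsto_const_nhds
            exact (h1.atTop_add h2).congr (fun x => by ring)
        exact key.congr (fun x => by rw [neg_div_neg_eq])
      apply Filter.Tendsto.congr' _ hmain
      filter_upwards [Ioo_mem_nhdsLT_of_mem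
        (Set.mem_Ioc.2 ⟨ha₁lt, le_rfl⟩)] with x hx
      simp only [hGdef]
      rw [mul_comm (xt - x) (h x), mul_div_mul_left _ _ (hhpos x (hsub hx)).ne']
    have hFh := HasDerivAt.lhopital_zero_left_on_Ioo ha₁lt
      (fun x _ => hFderiv x) (fun x hx => hhderiv x (hsub hx)) hg' hFto1 hhto1 hdiv
    have hσF := hFh.const_mul σ
    rw [mul_zero] at hσF
    apply Filter.Tendsto.congr' _ hσF
    filter_upwards [Ioo_mem_nhdsLT_of_mem
      (Set.mem_Ioc.2 ⟨(by norm_num : (0:ℝ) < 1), le_rfl⟩)] with x hx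
    rw [hφ₂F x (Set.Ioo_subset_Icc_self hx), hφ₁inv x hx, div_eq_mul_inv]
    ring
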